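/- Consider the real Lie algebra generated by i·x·σ_z and i·σ_x inside the space of matrix-valued polynomial functions of x. Every element of this Lie algebra is of the form p(x)·iσ_x + q(x)·iσ_y + r(x)·iσ_z where p is an even polynomial and q, r are odd polynomials. In particular, i·σ_y does not belong to this Lie algebra. -/

import Mathlib

open Matrix Polynomial

attribute [local instance 100] LieRing.ofAssociativeRing

noncomputable def sigmaX : Matrix (Fin 2) (Fin 2) ℂ := !![0, 1; 1, 0]
noncomputable def sigmaY : Matrix (Fin 2) (Fin 2) ℂ := !![0, -Complex.I; Complex.I, 0]
noncomputable def sigmaZ : Matrix (Fin 2) (Fin 2) ℂ := !![1, 0; 0, -1]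

noncomputable def combo (p q r : Polynomial ℝ) : ℝ → Matrix (Fin 2) (Fin 2) ℂ :=
  fun x : ℝ =>
    (Complex.ofReal (p.eval x)) • (Complex.I • sigmaX) + (Complex.ofReal (q.eval x)) • (Complex.I • sigmaY) +
      (Complex.ofReal (r.eval x)) • (Complex.I • sigmaZ)

lemma combo_lie (p1 q1 r1 p2 q2 r2 : Polynomial ℝ) :
    ⁅combo p1 q1 r1, combo p2 q2 r2⁆ =
      combo ((-2 : Polynomial ℝ) * (q1*r2 - r1*q2)) ((-2 : Polynomial ℝ) * (r1*p2 - p1*r2))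
        ((-2 : Polynomial ℝ) * (p1*q2 - q1*p2)) := by
  funext x
  show ⁅combo p1 q1 r1 x, combo p2 q2 r2 x⁆ = _
  simp only [Ring.lie_def, combo, sigmaX, sigmaY, sigmaZ]
  ext i j
  fin_cases i <;> fin_cases j <;>
    simp [Matrix.mul_apply, Fin.sum_univ_two, Complex.ext_iff] <;> ring_nf <;> simp

lemma combo_add (p1 q1 r1 p2 q2 r2 : Polynomial ℝ) :
    combo p1 q1 r1 + combo p2 q2 r2 = combo (p1+p2) (q1+q2) (r1+r2) := by
  funext x
  show combo p1 q1 r1 x + combo p2 q2 r2 x = _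
  simp only [combo, eval_add, Complex.ofReal_add, add_smul]
  abel

lemma combo_smul (c : ℝ) (p q r : Polynomial ℝ) :
    c • combo p q r = combo (Polynomial.C c * p) (Polynomial.C c * q) (Polynomial.C c * r) := by
  funext x
  show c • combo p q r x = _
  simp only [combo, eval_mul, eval_C, Complex.ofReal_mul, mul_smul, smul_add,
    Complex.coe_smul]

noncomputable def goodAlg : LieSubalgebra ℝ (ℝ → Matrix (Fin 2) (Fin 2) ℂ) where
  carrier := {f | ∃ p q r : Polynomial ℝ,
    (∀ x : ℝ, p.eval (-x) = p.eval x) ∧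
    (∀ x : ℝ, q.eval (-x) = -q.eval x) ∧
    (∀ x : ℝ, r.eval (-x) = -r.eval x) ∧ f = combo p q r}
  add_mem' := by
    rintro f g ⟨p1, q1, r1, hp1, hq1, hr1, rfl⟩ ⟨p2, q2, r2, hp2, hq2, hr2, rfl⟩
    exact ⟨p1+p2, q1+q2, r1+r2,
      fun x => by simp [hp1 x, hp2 x],
      fun x => by simp [hq1 x, hq2 x]; ring,
      fun x => by simp [hr1 x, hr2 x]; ring,
      combo_add _ _ _ _ _ _⟩
  zero_mem' := by
    refine ⟨0, 0, 0, by simp, by simp, by simp, ?_⟩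
    funext x; simp [combo]
  smul_mem' := by
    rintro c f ⟨p, q, r, hp, hq, hr, rfl⟩
    exact ⟨Polynomial.C c * p, Polynomial.C c * q, Polynomial.C c * r,
      fun x => by simp [hp x],
      fun x => by simp [hq x],
      fun x => by simp [hr x],
      combo_smul _ _ _ _⟩
  lie_mem' := by
    rintro f g ⟨p1, q1, r1, hp1, hq1, hr1, rfl⟩ ⟨p2, q2, r2, hp2, hq2, hr2, rfl⟩
    refine ⟨_, _, _, ?_, ?_, ?_, combo_lie p1 q1 r1 p2 q2 r2⟩
    · intro x; simp [hp1 x, hq1 x, hr1 x, hp2 x, hq2 x, hr2 x] <;> ring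
    · intro x; simp [hp1 x, hq1 x, hr1 x, hp2 x, hq2 x, hr2 x] <;> ring
    · intro x; simp [hp1 x, hq1 x, hr1 x, hp2 x, hq2 x, hr2 x] <;> ring

lemma span_le_good :
    LieSubalgebra.lieSpan ℝ (ℝ → Matrix (Fin 2) (Fin 2) ℂ)
        {fun x : ℝ => (x : ℂ) • (Complex.I • sigmaZ), fun _ : ℝ => Complex.I • sigmaX}
      ≤ goodAlg := by
  rw [LieSubalgebra.lieSpan_le]
  rintro f (rfl | rfl)
  · refine ⟨0, 0, Polynomial.X, by simp, by simp, by simp, ?_⟩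
    funext x; simp [combo]
  · refine ⟨Polynomial.C 1, 0, 0, by simp, by simp, by simp, ?_⟩
    funext x; simp [combo]

theorem lieSpan_xz_structure :
    (∀ f ∈ LieSubalgebra.lieSpan ℝ (ℝ → Matrix (Fin 2) (Fin 2) ℂ)
        {fun x : ℝ => (x : ℂ) • (Complex.I • sigmaZ), fun _ : ℝ => Complex.I • sigmaX},
      ∃ p q r : Polynomial ℝ,
        (∀ x : ℝ, p.eval (-x) = p.eval x) ∧
        (∀ x : ℝ, q.eval (-x) = -q.eval x) ∧
        (∀ x : ℝ, r.eval (-x) = -r.eval x) ∧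
        f = fun x : ℝ =>
          (Complex.ofReal (p.eval x)) • (Complex.I • sigmaX) + (Complex.ofReal (q.eval x)) • (Complex.I • sigmaY) +
            (Complex.ofReal (r.eval x)) • (Complex.I • sigmaZ)) ∧
    (fun _ : ℝ => Complex.I • sigmaY) ∉
      LieSubalgebra.lieSpan ℝ (ℝ → Matrix (Fin 2) (Fin 2) ℂ)
        {fun x : ℝ => (x : ℂ) • (Complex.I • sigmaZ), fun _ : ℝ => Complex.I • sigmaX} := by
  constructor
  · intro f hf
    exact span_le_good hf
  · intro hmem
    obtain ⟨p, q, r, hp, hq, hr, hf⟩ := span_le_good hmem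
    have h0 := congrFun hf 0
    have hq1 : q.eval 0 = 1 := by
      have := congrArg (fun M => (M 0 1).re) h0
      simp [combo, sigmaX, sigmaY, sigmaZ] at this
      linarith
    have := hq 0
    rw [neg_zero, hq1] at this
    linarith
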